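/- Let c_1,…,c_n be positive integers and define d_i = 2^{n+1}·(c_i + Σ_{j=1}^n c_j) + 2^i for i ∈ [n]. Then for all T, T' ⊆ [n] with |T| < |T'|, one has Σ_{i∈T} d_i < Σ_{i∈T'} d_i. In particular, for proper subsets T, T' ⊊ [n] with |T| > |T'| (taking d_{n+1} = 1 and cost(S) = Σ_{i∈[n+1]∖S} d_i over the ground set [n+1]), cost(T) < cost(T'). -/

import Mathlib

open Finset
open scoped BigOperators

/-- `d i = 2^(n+1) · (c i + Σ_{j=1}^n c j) + 2^i`. -/
def dBig (n : ℕ) (c : ℕ → ℕ) : ℕ → ℕ :=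
  fun i => 2 ^ (n + 1) * (c i + ∑ j ∈ Finset.Icc 1 n, c j) + 2 ^ i

/-- `d` extended to the ground set `[n+1]` by `d (n+1) = 1`. -/
def dFull (n : ℕ) (c : ℕ → ℕ) : ℕ → ℕ :=
  fun i => if i = n + 1 then 1 else dBig n c i

/-- `cost(S) = Σ_{i ∈ [n+1] ∖ S} d i`. -/
def cost (n : ℕ) (c : ℕ → ℕ) (S : Finset ℕ) : ℕ :=
  ∑ i ∈ Finset.Icc 1 (n + 1) \ S, dFull n c i

lemma two_pow_sum_lt (m : ℕ) : ∑ i ∈ Finset.range m, 2 ^ i < 2 ^ m := by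
  induction m with
  | zero => simp
  | succ m ih => rw [Finset.sum_range_succ, pow_succ]; omega

theorem stmt_10 (n : ℕ) (c : ℕ → ℕ) (hc : ∀ i ∈ Finset.Icc 1 n, 0 < c i) :
    (∀ T ⊆ Finset.Icc 1 n, ∀ T' ⊆ Finset.Icc 1 n, T.card < T'.card →
      ∑ i ∈ T, dBig n c i < ∑ i ∈ T', dBig n c i) ∧
    (∀ T T' : Finset ℕ, T ⊂ Finset.Icc 1 n → T' ⊂ Finset.Icc 1 n →
      T'.card < T.card → cost n c T < cost n c T') := by
  set C := ∑ j ∈ Finset.Icc 1 n, c j with hC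
  set P := 2 ^ (n + 1) with hP
  have hPpos : 0 < P := pow_pos (by norm_num) _
  have hsplit : ∀ S : Finset ℕ, ∑ i ∈ S, dBig n c i
      = P * ∑ i ∈ S, c i + S.card * (P * C) + ∑ i ∈ S, 2 ^ i := by
    intro S
    calc ∑ i ∈ S, dBig n c i = ∑ i ∈ S, (P * c i + P * C + 2 ^ i) := by
          refine Finset.sum_congr rfl fun i _ => ?_
          simp [dBig, ← hC, ← hP]; ring
      _ = _ := by
          rw [Finset.sum_add_distrib, Finset.sum_add_distrib, ← Finset.mul_sum,
            Finset.sum_const, smul_eq_mul]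
  have key : ∀ T ⊆ Finset.Icc 1 n, ∀ T' ⊆ Finset.Icc 1 n, T.card < T'.card →
      ∑ i ∈ T, dBig n c i < ∑ i ∈ T', dBig n c i := by
    intro T hT T' hT' hcard
    have hTc : ∑ i ∈ T, c i ≤ C :=
      Finset.sum_le_sum_of_subset hT
    have hT2 : ∑ i ∈ T, 2 ^ i < P := by
      calc ∑ i ∈ T, 2 ^ i ≤ ∑ i ∈ Finset.range (n + 1), 2 ^ i := by
            apply Finset.sum_le_sum_of_subset
            intro i hi
            have := hT hi
            simp only [Finset.mem_Icc] at this
            simp [Finset.mem_range]; omega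
        _ < P := two_pow_sum_lt (n + 1)
    have hT'c : T'.card ≤ ∑ i ∈ T', c i := by
      calc T'.card = T'.card * 1 := (mul_one _).symm
        _ ≤ ∑ i ∈ T', c i := by
            rw [← smul_eq_mul]
            exact Finset.card_nsmul_le_sum T' c 1 fun i hi => hc i (hT' hi)
    rw [hsplit T, hsplit T']
    have h1 : T.card + 1 ≤ T'.card := hcard
    have e1 : (T.card + 1) * (P * C) ≤ T'.card * (P * C) := mul_le_mul_left h1 _
    have e2 : P * T'.card ≤ P * ∑ i ∈ T', c i := mul_le_mul_right hT'c _
    have e3 : P * ∑ i ∈ T, c i ≤ P * C := mul_le_mul_right hTc _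
    have e4 : P * (T.card + 1) ≤ P * T'.card := mul_le_mul_right h1 _
    nlinarith [Finset.sum_nonneg (fun i (_ : i ∈ T') => Nat.zero_le (2 ^ i))]
  refine ⟨key, ?_⟩
  intro T T' hT hT' hcard
  have hnot : ∀ S : Finset ℕ, S ⊆ Finset.Icc 1 n → (n + 1) ∉ S := by
    intro S hS h
    have := hS h
    simp [Finset.mem_Icc] at this
  have hcost : ∀ S : Finset ℕ, S ⊆ Finset.Icc 1 n →
      cost n c S = 1 + ∑ i ∈ Finset.Icc 1 n \ S, dBig n c i := by
    intro S hS
    have hset : Finset.Icc 1 (n + 1) \ S = insert (n + 1) (Finset.Icc 1 n \ S) := by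
      ext i
      simp only [Finset.mem_sdiff, Finset.mem_Icc, Finset.mem_insert]
      constructor
      · rintro ⟨⟨h1, h2⟩, h3⟩
        rcases eq_or_lt_of_le h2 with h | h
        · left; exact h
        · right; exact ⟨⟨h1, by omega⟩, h3⟩
      · rintro (rfl | ⟨⟨h1, h2⟩, h3⟩)
        · exact ⟨⟨by omega, le_refl _⟩, hnot S hS⟩
        · exact ⟨⟨h1, by omega⟩, h3⟩
    rw [cost, hset, Finset.sum_insert (by simp [Finset.mem_sdiff, Finset.mem_Icc])]
    congr 1
    · simp [dFull]
    · refine Finset.sum_congr rfl fun i hi => ?_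
      have : i ∈ Finset.Icc 1 n := (Finset.mem_sdiff.mp hi).1
      simp only [Finset.mem_Icc] at this
      simp [dFull, show i ≠ n + 1 by omega]
  rw [hcost T hT.subset, hcost T' hT'.subset]
  have hlt := key (Finset.Icc 1 n \ T) Finset.sdiff_subset (Finset.Icc 1 n \ T')
    Finset.sdiff_subset ?_
  · omega
  · rw [Finset.card_sdiff_of_subset hT.subset, Finset.card_sdiff_of_subset hT'.subset]
    have h1 : T.card ≤ (Finset.Icc 1 n).card := Finset.card_le_card hT.subset
    omega
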